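/- There is a bijection between B_n and the set C_{n+1} of sequences a_1,...,a_{2n+2} with n+1 entries equal to 1 and n+1 entries equal to -1 such that every partial sum a_1 + ... + a_l is nonnegative. -/

import Mathlib

open Finset

/-- `f : Fin n → Option (Fin n)` represents an injective partial map of `{1,…,n}`
(elements 0-indexed): `f a = some x` means `a ∈ D(f)` with image `x`. Injectivity: -/
def IsPartialInj {n : ℕ} (f : Fin n → Option (Fin n)) : Prop :=
  ∀ a b x, f a = some x → f b = some x → a = b

/-- order preserving: `a < b` in the domain implies `f a < f b`. -/
def IsOrderPres {n : ℕ} (f : Fin n → Option (Fin n)) : Prop :=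
  ∀ a b x y, a < b → f a = some x → f b = some y → x < y

/-- order decreasing: `f a ≤ a` on the domain. -/
def IsOrderDec {n : ℕ} (f : Fin n → Option (Fin n)) : Prop :=
  ∀ a x, f a = some x → x ≤ a

/-- The planar upper triangular rook monoid `B_n`: order-preserving,
order-decreasing injective partial maps of `{1,…,n}`. -/
def Bn (n : ℕ) : Set (Fin n → Option (Fin n)) :=
  {f | IsPartialInj f ∧ IsOrderPres f ∧ IsOrderDec f}

/-- `C_m`: sequences of length `2m` with `m` entries `1` and `m` entries `-1`,
all of whose partial sums are nonnegative. -/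
def CSeq (m : ℕ) : Set (Fin (2 * m) → ℤ) :=
  {a | (∀ i, a i = 1 ∨ a i = -1) ∧
    (Finset.univ.filter (fun i => a i = 1)).card = m ∧
    ∀ l, 0 ≤ ∑ i ∈ Finset.univ.filter (fun i => i ≤ l), a i}


section BnCSeqAux

open Finset

variable {n : ℕ}

/-! ### Part 1: `Bn` and pairs of finsets -/

def domOf (f : Fin n → Option (Fin n)) : Finset (Fin n) :=
  univ.filter (fun a => f a ≠ none)

def ranOf (f : Fin n → Option (Fin n)) : Finset (Fin n) :=
  univ.filter (fun x => ∃ a, f a = some x)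

def cnt (S : Finset (Fin n)) (j : ℕ) : ℕ := (S.filter (fun a => a.val < j)).card

def DRSet (n : ℕ) : Set (Finset (Fin n) × Finset (Fin n)) :=
  {p | p.1.card = p.2.card ∧ ∀ j : ℕ, cnt p.1 j ≤ cnt p.2 j}

lemma isSome_of_mem_domOf {f : Fin n → Option (Fin n)} {a : Fin n} (ha : a ∈ domOf f) :
    (f a).isSome := by
  simp only [domOf, mem_filter] at ha
  exact Option.ne_none_iff_isSome.mp ha.2

lemma domOf_card {f : Fin n → Option (Fin n)} (hinj : IsPartialInj f) :
    (domOf f).card = (ranOf f).card := by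
  apply Finset.card_bij (fun a ha => (f a).get (isSome_of_mem_domOf ha))
  · intro a ha
    simp only [ranOf, mem_filter, mem_univ, true_and]
    exact ⟨a, (Option.some_get _).symm⟩
  · intro a₁ ha₁ a₂ ha₂ h
    exact hinj a₁ a₂ ((f a₂).get (isSome_of_mem_domOf ha₂)) (h ▸ (Option.some_get _).symm)
      (Option.some_get _).symm
  · intro x hx
    simp only [ranOf, mem_filter, mem_univ, true_and] at hx
    obtain ⟨a, hfa⟩ := hx
    have ha : a ∈ domOf f := by simp [domOf, hfa]
    exact ⟨a, ha, by simp [hfa]⟩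

/-- canonical order-preserving partial injection with domain `D` and range `R`. -/
def mkFun (D R : Finset (Fin n)) (h : R.card = D.card) : Fin n → Option (Fin n) :=
  fun a => if ha : a ∈ D then some (R.orderEmbOfFin h ((D.orderIsoOfFin rfl).symm ⟨a, ha⟩)) else none

lemma mkFun_apply_emb (D R : Finset (Fin n)) (h : R.card = D.card) (i : Fin D.card) :
    mkFun D R h (D.orderEmbOfFin rfl i) = some (R.orderEmbOfFin h i) := by
  have hm : D.orderEmbOfFin rfl i ∈ D := D.orderEmbOfFin_mem rfl i
  have : (D.orderIsoOfFin rfl).symm ⟨D.orderEmbOfFin rfl i, hm⟩ = i := by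
    have : (⟨D.orderEmbOfFin rfl i, hm⟩ : {x // x ∈ D}) = (D.orderIsoOfFin rfl) i :=
      Subtype.ext (D.coe_orderIsoOfFin_apply rfl i).symm
    rw [this, OrderIso.symm_apply_apply]
  simp [mkFun, hm, this]

/-- key: dominance implies the order isomorphism is pointwise decreasing. -/
lemma emb_le_emb (D R : Finset (Fin n)) (h : R.card = D.card)
    (hdom : ∀ j : ℕ, cnt D j ≤ cnt R j) (i : Fin D.card) :
    R.orderEmbOfFin h i ≤ D.orderEmbOfFin rfl i := by
  by_contra hlt
  push_neg at hlt
  set d := D.orderEmbOfFin rfl i with hd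
  have h1 : i.val + 1 ≤ cnt D (d.val + 1) := by
    have hsub : (Finset.Iic i).image (D.orderEmbOfFin rfl) ⊆ D.filter (fun a => a.val < d.val + 1) := by
      intro x hx
      simp only [mem_image, mem_Iic] at hx
      obtain ⟨j, hj, rfl⟩ := hx
      refine mem_filter.mpr ⟨D.orderEmbOfFin_mem rfl j, ?_⟩
      have : D.orderEmbOfFin rfl j ≤ d := (D.orderEmbOfFin rfl).monotone hj
      omega
    calc i.val + 1 = (Finset.Iic i).card := (Fin.card_Iic i).symm
      _ = ((Finset.Iic i).image (D.orderEmbOfFin rfl)).card :=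
          (Finset.card_image_of_injective _ (D.orderEmbOfFin rfl).injective).symm
      _ ≤ _ := Finset.card_le_card hsub
  have h2 : cnt R (d.val + 1) ≤ i.val := by
    have hsub : R.filter (fun a => a.val < d.val + 1) ⊆ (Finset.Iio i).image (R.orderEmbOfFin h) := by
      intro x hx
      simp only [mem_filter] at hx
      have : x ∈ Set.range (R.orderEmbOfFin h) := by
        rw [Finset.range_orderEmbOfFin]; exact hx.1
      obtain ⟨j, rfl⟩ := this
      refine mem_image.mpr ⟨j, mem_Iio.mpr ?_, rfl⟩
      by_contra hji
      push_neg at hji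
      have : R.orderEmbOfFin h i ≤ R.orderEmbOfFin h j := (R.orderEmbOfFin h).monotone hji
      have hx2 := hx.2
      simp only [Fin.le_def] at this hlt
      omega
    calc cnt R (d.val+1) ≤ ((Finset.Iio i).image (R.orderEmbOfFin h)).card := Finset.card_le_card hsub
      _ = (Finset.Iio i).card := Finset.card_image_of_injective _ (R.orderEmbOfFin h).injective
      _ = i.val := Fin.card_Iio i
  have := hdom (d.val + 1)
  omega

lemma mkFun_some {D R : Finset (Fin n)} {h : R.card = D.card} {a x : Fin n}
    (hx : mkFun D R h a = some x) :
    ∃ ha : a ∈ D, R.orderEmbOfFin h ((D.orderIsoOfFin rfl).symm ⟨a, ha⟩) = x := by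
  by_cases ha : a ∈ D
  · exact ⟨ha, by simpa [mkFun, ha] using hx⟩
  · simp [mkFun, ha] at hx

lemma mkFun_mem_Bn (D R : Finset (Fin n)) (h : R.card = D.card)
    (hdom : ∀ j : ℕ, cnt D j ≤ cnt R j) : mkFun D R h ∈ Bn n := by
  refine ⟨?_, ?_, ?_⟩
  · intro a b x hax hbx
    obtain ⟨ha, hax'⟩ := mkFun_some hax
    obtain ⟨hb, hbx'⟩ := mkFun_some hbx
    have := (R.orderEmbOfFin h).injective (hax'.trans hbx'.symm)
    have := congrArg (D.orderIsoOfFin rfl) (this : _)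
    simp only [OrderIso.apply_symm_apply] at this
    exact congrArg Subtype.val this
  · intro a b x y hab hax hby
    obtain ⟨ha, hax'⟩ := mkFun_some hax
    obtain ⟨hb, hby'⟩ := mkFun_some hby
    rw [← hax', ← hby']
    have h1 : (⟨a, ha⟩ : {z // z ∈ D}) < ⟨b, hb⟩ := hab
    exact (R.orderEmbOfFin h).strictMono ((D.orderIsoOfFin rfl).symm.strictMono h1)
  · intro a x hax
    obtain ⟨ha, hax'⟩ := mkFun_some hax
    set i := (D.orderIsoOfFin rfl).symm ⟨a, ha⟩
    have h2 : D.orderEmbOfFin rfl i = a := by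
      have : (D.orderIsoOfFin rfl) i = ⟨a, ha⟩ := OrderIso.apply_symm_apply _ _
      rw [← D.coe_orderIsoOfFin_apply rfl i, this]
    calc x = R.orderEmbOfFin h i := hax'.symm
      _ ≤ D.orderEmbOfFin rfl i := emb_le_emb D R h hdom i
      _ = a := h2

lemma domOf_mkFun (D R : Finset (Fin n)) (h : R.card = D.card) : domOf (mkFun D R h) = D := by
  ext a
  by_cases ha : a ∈ D <;> simp [domOf, mkFun, ha]

lemma ranOf_mkFun (D R : Finset (Fin n)) (h : R.card = D.card) : ranOf (mkFun D R h) = R := by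
  ext x
  simp only [ranOf, mem_filter, mem_univ, true_and]
  constructor
  · rintro ⟨a, hax⟩
    obtain ⟨ha, hax'⟩ := mkFun_some hax
    exact hax' ▸ R.orderEmbOfFin_mem h _
  · intro hx
    have : x ∈ Set.range (R.orderEmbOfFin h) := by rw [Finset.range_orderEmbOfFin]; exact hx
    obtain ⟨i, rfl⟩ := this
    exact ⟨D.orderEmbOfFin rfl i, mkFun_apply_emb D R h i⟩

lemma eq_mkFun {f : Fin n → Option (Fin n)} (hf : f ∈ Bn n) :
    f = mkFun (domOf f) (ranOf f) (domOf_card hf.1).symm := by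
  obtain ⟨hinj, hpres, hdec⟩ := hf
  set D := domOf f
  set R := ranOf f
  have hcard : R.card = D.card := (domOf_card hinj).symm
  set g : Fin D.card → Fin n := fun i =>
    (f (D.orderEmbOfFin rfl i)).get (isSome_of_mem_domOf (D.orderEmbOfFin_mem rfl i)) with hg
  have hfg : ∀ i, f (D.orderEmbOfFin rfl i) = some (g i) := fun i => (Option.some_get _).symm
  have hgR : ∀ i, g i ∈ R := by
    intro i
    simp only [R, ranOf, mem_filter, mem_univ, true_and]
    exact ⟨_, hfg i⟩
  have hmono : StrictMono g := by
    intro i j hij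
    exact hpres _ _ _ _ ((D.orderEmbOfFin rfl).strictMono hij) (hfg i) (hfg j)
  have hgeq : g = R.orderEmbOfFin hcard := Finset.orderEmbOfFin_unique hcard hgR hmono
  funext a
  by_cases ha : a ∈ D
  · set i := (D.orderIsoOfFin rfl).symm ⟨a, ha⟩ with hi
    have h2 : D.orderEmbOfFin rfl i = a := by
      have : (D.orderIsoOfFin rfl) i = ⟨a, ha⟩ := OrderIso.apply_symm_apply _ _
      rw [← D.coe_orderIsoOfFin_apply rfl i, this]
    have : f a = some (g i) := h2 ▸ hfg i
    rw [this, hgeq, mkFun]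
    simp only [show a ∈ domOf f from ha, dif_pos]
    rfl
  · have h1 : f a = none := by
      by_contra hne
      exact ha (by simp [D, domOf, hne])
    rw [h1, mkFun]
    simp [show a ∉ domOf f from ha]

lemma pair_mem_DRSet {f : Fin n → Option (Fin n)} (hf : f ∈ Bn n) :
    (domOf f, ranOf f) ∈ DRSet n := by
  obtain ⟨hinj, hpres, hdec⟩ := hf
  refine ⟨domOf_card hinj, fun j => ?_⟩
  apply Finset.card_le_card_of_injOn (fun a => (f a).getD a)
  · intro a ha
    simp only [cnt, mem_coe, mem_filter] at ha ⊢
    obtain ⟨haD, haj⟩ := ha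
    obtain ⟨x, hx⟩ := Option.isSome_iff_exists.mp (isSome_of_mem_domOf haD)
    have hxa : x ≤ a := hdec a x hx
    rw [hx]
    simp only [Option.getD_some]
    refine ⟨?_, ?_⟩
    · simp only [ranOf, mem_filter, mem_univ, true_and]
      exact ⟨a, hx⟩
    · have := Fin.le_def.mp hxa
      omega
  · intro a ha b hb hab
    simp only [coe_filter, Set.mem_setOf_eq] at ha hb
    obtain ⟨x, hx⟩ := Option.isSome_iff_exists.mp (isSome_of_mem_domOf ha.1)
    obtain ⟨y, hy⟩ := Option.isSome_iff_exists.mp (isSome_of_mem_domOf hb.1)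
    simp only [hx, hy, Option.getD_some] at hab
    exact hinj a b x hx (hab ▸ hy)

def toDR (f : Bn n) : DRSet n := ⟨(domOf f.1, ranOf f.1), pair_mem_DRSet f.2⟩

lemma mkFun_congr {D D' R R' : Finset (Fin n)} (hD : D = D') (hR : R = R')
    (h : R.card = D.card) : mkFun D R h = mkFun D' R' (by rw [← hD, ← hR]; exact h) := by
  subst hD; subst hR; rfl

noncomputable def equivBnDRSet (n : ℕ) : Bn n ≃ DRSet n := by
  apply Equiv.ofBijective (fun f => toDR f)
  constructor
  · intro f g hfg
    have h1 : domOf f.1 = domOf g.1 := congrArg (fun p => p.1.1) hfg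
    have h2 : ranOf f.1 = ranOf g.1 := congrArg (fun p => p.1.2) hfg
    apply Subtype.ext
    rw [eq_mkFun f.2, eq_mkFun g.2]
    exact mkFun_congr h1 h2 _
  · rintro ⟨⟨D, R⟩, hcard, hdom⟩
    refine ⟨⟨mkFun D R hcard.symm, mkFun_mem_Bn D R hcard.symm hdom⟩, ?_⟩
    apply Subtype.ext
    show (domOf (mkFun D R hcard.symm), ranOf (mkFun D R hcard.symm)) = (D, R)
    rw [domOf_mkFun, ranOf_mkFun]

/-! ### Part 2: the encoding sequence and its partial sums -/

def seqOf (D R : Finset (Fin n)) : ℕ → ℤ := fun i =>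
  if i = 0 then 1
  else if i % 2 = 1 then
    (if h : (i - 1) / 2 < n then (if (⟨(i - 1) / 2, h⟩ : Fin n) ∈ R then 1 else -1) else -1)
  else (if h : i / 2 - 1 < n then (if (⟨i / 2 - 1, h⟩ : Fin n) ∈ D then -1 else 1) else 1)

lemma seqOf_zero (D R : Finset (Fin n)) : seqOf D R 0 = 1 := by simp [seqOf]

lemma seqOf_odd (D R : Finset (Fin n)) (j : ℕ) (hj : j < n) :
    seqOf D R (2 * j + 1) = if (⟨j, hj⟩ : Fin n) ∈ R then 1 else -1 := by
  have h1 : (2 * j + 1 - 1) / 2 = j := by omega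
  simp only [seqOf, h1]
  rw [if_neg (by omega), if_pos (by omega), dif_pos hj]

lemma seqOf_last (D R : Finset (Fin n)) : seqOf D R (2 * n + 1) = -1 := by
  have h1 : (2 * n + 1 - 1) / 2 = n := by omega
  simp only [seqOf, h1]
  rw [if_neg (by omega), if_pos (by omega), dif_neg (by omega)]

lemma seqOf_even (D R : Finset (Fin n)) (j : ℕ) (hj : j < n) :
    seqOf D R (2 * j + 2) = if (⟨j, hj⟩ : Fin n) ∈ D then -1 else 1 := by
  have h1 : (2 * j + 2) / 2 - 1 = j := by omega
  simp only [seqOf, h1]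
  rw [if_neg (by omega), if_neg (by omega), dif_pos hj]

lemma seqOf_pm (D R : Finset (Fin n)) (i : ℕ) : seqOf D R i = 1 ∨ seqOf D R i = -1 := by
  unfold seqOf
  split_ifs <;> simp

def TT (D R : Finset (Fin n)) (N : ℕ) : ℤ := ∑ i ∈ Finset.range N, seqOf D R i

lemma cnt_succ (S : Finset (Fin n)) (j : ℕ) (hj : j < n) :
    cnt S (j + 1) = cnt S j + (if (⟨j, hj⟩ : Fin n) ∈ S then 1 else 0) := by
  by_cases h : (⟨j, hj⟩ : Fin n) ∈ S
  · rw [if_pos h]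
    have he : S.filter (fun a => a.val < j + 1) = insert ⟨j, hj⟩ (S.filter (fun a => a.val < j)) := by
      ext a
      simp only [mem_filter, mem_insert]
      constructor
      · rintro ⟨haS, haj⟩
        rcases Nat.lt_succ_iff_lt_or_eq.mp haj with h' | h'
        · exact Or.inr ⟨haS, h'⟩
        · exact Or.inl (Fin.ext h')
      · rintro (rfl | ⟨haS, haj⟩)
        · exact ⟨h, by simp⟩
        · exact ⟨haS, by omega⟩
    rw [cnt, he, Finset.card_insert_of_notMem (by simp [mem_filter])]
    rfl
  · rw [if_neg h]
    have he : S.filter (fun a => a.val < j + 1) = S.filter (fun a => a.val < j) := by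
      ext a
      simp only [mem_filter, and_congr_right_iff]
      intro haS
      constructor
      · intro haj
        rcases Nat.lt_succ_iff_lt_or_eq.mp haj with h' | h'
        · exact h'
        · exact absurd haS (by rw [show a = ⟨j, hj⟩ from Fin.ext h'] ; exact h)
      · omega
    simp only [cnt, he, add_zero]

lemma cnt_stable (S : Finset (Fin n)) {j : ℕ} (hj : n ≤ j) : cnt S j = S.card := by
  rw [cnt, Finset.filter_true_of_mem (fun a _ => lt_of_lt_of_le a.isLt hj)]

lemma TT_odd (D R : Finset (Fin n)) : ∀ j, j ≤ n →
    TT D R (2 * j + 1) = 1 + 2 * (cnt R j : ℤ) - 2 * (cnt D j : ℤ) := by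
  intro j
  induction j with
  | zero =>
    intro _
    simp [TT, Finset.sum_range_one, seqOf_zero, cnt]
  | succ j ih =>
    intro hj
    have hjn : j < n := hj
    have e1 : 2 * (j + 1) + 1 = (2 * j + 1) + 1 + 1 := by ring
    rw [e1, TT, Finset.sum_range_succ, Finset.sum_range_succ, ← TT,
      ih (le_of_lt hjn), seqOf_odd D R j hjn, seqOf_even D R j hjn,
      cnt_succ R j hjn, cnt_succ D j hjn]
    push_cast
    split_ifs <;> ring

lemma TT_nonneg (D R : Finset (Fin n)) (hdom : ∀ j : ℕ, cnt D j ≤ cnt R j) :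
    ∀ N, N ≤ 2 * n + 2 → 0 ≤ TT D R N := by
  intro N hN
  rcases Nat.even_or_odd N with ⟨j, hj⟩ | ⟨j, hj⟩
  · rcases Nat.eq_zero_or_pos j with rfl | hpos
    · simp [hj, TT]
    · obtain ⟨j', rfl⟩ := Nat.exists_eq_succ_of_ne_zero (Nat.pos_iff_ne_zero.mp hpos)
      have hN' : N = (2 * j' + 1) + 1 := by omega
      have hj'n : j' ≤ n := by omega
      rw [hN', TT, Finset.sum_range_succ, ← TT, TT_odd D R j' hj'n]
      have := hdom j'
      rcases seqOf_pm D R (2 * j' + 1) with h | h <;> rw [h] <;> omega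
  · have hj' : N = 2 * j + 1 := by omega
    have hjn : j ≤ n := by omega
    rw [hj', TT_odd D R j hjn]
    have := hdom j
    omega

lemma TT_total (D R : Finset (Fin n)) (hcard : D.card = R.card) : TT D R (2 * n + 2) = 0 := by
  have e1 : 2 * n + 2 = (2 * n + 1) + 1 := by ring
  rw [e1, TT, Finset.sum_range_succ, ← TT, TT_odd D R n le_rfl, seqOf_last,
    cnt_stable D le_rfl, cnt_stable R le_rfl, hcard]
  ring

/-! ### Part 3: the bridge to `CSeq` -/

lemma sum_filter_le_eq {M : ℕ} (g : ℕ → ℤ) (l : Fin M) :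
    ∑ i ∈ univ.filter (fun i : Fin M => i ≤ l), g i.val = ∑ i ∈ Finset.range (l.val + 1), g i := by
  have himg : (univ.filter (fun i : Fin M => i ≤ l)).image Fin.val = Finset.range (l.val + 1) := by
    ext b
    simp only [Finset.mem_image, mem_filter, mem_univ, true_and, Finset.mem_range, Fin.le_def]
    constructor
    · rintro ⟨i, hi, rfl⟩; omega
    · intro hb
      exact ⟨⟨b, by have := l.isLt; omega⟩, by simp only [Fin.val_mk]; omega, rfl⟩
  rw [← himg, Finset.sum_image (fun x _ y _ h => Fin.ext h)]

lemma pm_sum {M : ℕ} (b : Fin M → ℤ) (hb : ∀ i, b i = 1 ∨ b i = -1) :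
    ∑ i, b i = 2 * ((univ.filter (fun i => b i = 1)).card : ℤ) - M := by
  rw [← Finset.sum_filter_add_sum_filter_not univ (fun i => b i = 1)]
  have h1 : ∑ i ∈ univ.filter (fun i => b i = 1), b i
      = ((univ.filter (fun i => b i = 1)).card : ℤ) := by
    rw [Finset.sum_congr rfl (fun i hi => (Finset.mem_filter.mp hi).2)]
    simp
  have h2 : ∑ i ∈ univ.filter (fun i => ¬(b i = 1)), b i
      = -((univ.filter (fun i => ¬(b i = 1))).card : ℤ) := by
    have hc : ∀ i ∈ univ.filter (fun i => ¬(b i = 1)), b i = -1 :=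
      fun i hi => (hb i).resolve_left (Finset.mem_filter.mp hi).2
    rw [Finset.sum_congr rfl hc]
    simp
  have h3 := Finset.card_filter_add_card_filter_not (s := (univ : Finset (Fin M)))
    (fun i => b i = 1)
  have h4 : (univ : Finset (Fin M)).card = M := by simp
  rw [h1, h2]
  push_cast
  omega

def seqF (D R : Finset (Fin n)) : Fin (2 * (n + 1)) → ℤ := fun i => seqOf D R i.val

def Dex (a : Fin (2 * (n + 1)) → ℤ) : Finset (Fin n) :=
  univ.filter (fun j => a ⟨2 * j.val + 2, by have := j.isLt; omega⟩ = -1)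
def Rex (a : Fin (2 * (n + 1)) → ℤ) : Finset (Fin n) :=
  univ.filter (fun j => a ⟨2 * j.val + 1, by have := j.isLt; omega⟩ = 1)

lemma seqF_partial (D R : Finset (Fin n)) (l : Fin (2 * (n + 1))) :
    ∑ i ∈ univ.filter (fun i => i ≤ l), seqF D R i = TT D R (l.val + 1) :=
  sum_filter_le_eq (seqOf D R) l

lemma seqF_mem_CSeq (D R : Finset (Fin n)) (hcard : D.card = R.card)
    (hdom : ∀ j : ℕ, cnt D j ≤ cnt R j) : seqF D R ∈ CSeq (n + 1) := by
  refine ⟨fun i => seqOf_pm D R i.val, ?_, ?_⟩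
  · have htot : ∑ i, seqF D R i = 0 := by
      rw [show ∑ i, seqF D R i = ∑ i ∈ Finset.range (2 * (n + 1)), seqOf D R i from
        Fin.sum_univ_eq_sum_range (seqOf D R) (2 * (n + 1))]
      rw [show 2 * (n + 1) = 2 * n + 2 by ring]
      exact TT_total D R hcard
    have hps := pm_sum (seqF D R) (fun i => seqOf_pm D R i.val)
    rw [htot] at hps
    omega
  · intro l
    rw [seqF_partial]
    exact TT_nonneg D R hdom (l.val + 1) (by have := l.isLt; omega)

lemma a_zero {a : Fin (2 * (n + 1)) → ℤ} (ha : a ∈ CSeq (n + 1)) :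
    a ⟨0, by omega⟩ = 1 := by
  obtain ⟨ha1, ha2, ha3⟩ := ha
  have he : univ.filter (fun i : Fin (2 * (n + 1)) => i ≤ ⟨0, by omega⟩) = {⟨0, by omega⟩} := by
    ext i
    simp only [mem_filter, mem_univ, true_and, Finset.mem_singleton, Fin.le_def, Fin.ext_iff,
      Fin.val_mk]
    omega
  have h0 := ha3 ⟨0, by omega⟩
  rw [he, Finset.sum_singleton] at h0
  rcases ha1 ⟨0, by omega⟩ with h | h
  · exact h
  · rw [h] at h0; omega

lemma a_total {a : Fin (2 * (n + 1)) → ℤ} (ha : a ∈ CSeq (n + 1)) : ∑ i, a i = 0 := by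
  obtain ⟨ha1, ha2, ha3⟩ := ha
  have hps := pm_sum a ha1
  rw [ha2] at hps
  rw [hps]
  push_cast
  ring

lemma a_last {a : Fin (2 * (n + 1)) → ℤ} (ha : a ∈ CSeq (n + 1)) :
    a ⟨2 * n + 1, by omega⟩ = -1 := by
  have htot := a_total ha
  obtain ⟨ha1, ha2, ha3⟩ := ha
  have he : univ.filter (fun i : Fin (2 * (n + 1)) => i ≤ ⟨2 * n, by omega⟩)
      = univ.erase ⟨2 * n + 1, by omega⟩ := by
    ext i
    simp only [mem_filter, mem_univ, true_and, and_true, Finset.mem_erase, ne_eq, Fin.le_def,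
      Fin.ext_iff, Fin.val_mk]
    have := i.isLt
    omega
  have h0 := ha3 ⟨2 * n, by omega⟩
  rw [he, Finset.sum_erase_eq_sub (Finset.mem_univ _), htot] at h0
  rcases ha1 ⟨2 * n + 1, by omega⟩ with h | h
  · rw [h] at h0; omega
  · exact h

lemma recon {a : Fin (2 * (n + 1)) → ℤ} (ha : a ∈ CSeq (n + 1)) (i : Fin (2 * (n + 1))) :
    seqF (Dex a) (Rex a) i = a i := by
  have ha1 := ha.1
  have hi := i.isLt
  show seqOf (Dex a) (Rex a) i.val = a i
  rcases Nat.even_or_odd i.val with ⟨j, hj⟩ | ⟨j, hj⟩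
  · rcases Nat.eq_zero_or_pos j with rfl | hpos
    · have h0 : i = ⟨0, by omega⟩ := Fin.ext (by simp only [Fin.val_mk]; omega)
      rw [show i.val = 0 by omega, seqOf_zero]
      rw [h0]
      exact (a_zero ha).symm
    · obtain ⟨j', rfl⟩ := Nat.exists_eq_succ_of_ne_zero (Nat.pos_iff_ne_zero.mp hpos)
      have hj'n : j' < n := by omega
      have hieq : i = ⟨2 * j' + 2, by omega⟩ := Fin.ext (by simp only [Fin.val_mk]; omega)
      rw [show i.val = 2 * j' + 2 by omega, seqOf_even _ _ j' hj'n]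
      have hmem : (⟨j', hj'n⟩ : Fin n) ∈ Dex a ↔ a ⟨2 * j' + 2, by omega⟩ = -1 := by
        simp [Dex]
      rcases ha1 i with h | h
      · have hnot : (⟨j', hj'n⟩ : Fin n) ∉ Dex a := by
          rw [hmem, ← hieq, h]; omega
        rw [if_neg hnot, h]
      · have hyes : (⟨j', hj'n⟩ : Fin n) ∈ Dex a := by
          rw [hmem, ← hieq]; exact h
        rw [if_pos hyes, h]
  · rcases Nat.lt_or_ge j n with hjn | hjn
    · have hieq : i = ⟨2 * j + 1, by omega⟩ := Fin.ext (by simp only [Fin.val_mk]; omega)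
      rw [hj, seqOf_odd _ _ j hjn]
      have hmem : (⟨j, hjn⟩ : Fin n) ∈ Rex a ↔ a ⟨2 * j + 1, by omega⟩ = 1 := by
        simp [Rex]
      rcases ha1 i with h | h
      · have hyes : (⟨j, hjn⟩ : Fin n) ∈ Rex a := by
          rw [hmem, ← hieq]; exact h
        rw [if_pos hyes, h]
      · have hnot : (⟨j, hjn⟩ : Fin n) ∉ Rex a := by
          rw [hmem, ← hieq, h]; omega
        rw [if_neg hnot, h]
    · have hjeq : j = n := by omega
      have hieq : i = ⟨2 * n + 1, by omega⟩ := Fin.ext (by simp only [Fin.val_mk]; omega)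
      rw [hj, hjeq, seqOf_last, hieq]
      exact (a_last ha).symm

lemma extracted_mem {a : Fin (2 * (n + 1)) → ℤ} (ha : a ∈ CSeq (n + 1)) :
    (Dex a, Rex a) ∈ DRSet n := by
  have hpart : ∀ l : Fin (2 * (n + 1)),
      TT (Dex a) (Rex a) (l.val + 1) = ∑ i ∈ univ.filter (fun i => i ≤ l), a i := by
    intro l
    rw [← seqF_partial]
    exact Finset.sum_congr rfl (fun i _ => recon ha i)
  have htot : TT (Dex a) (Rex a) (2 * n + 2) = 0 := by
    have : TT (Dex a) (Rex a) (2 * (n + 1)) = ∑ i, seqF (Dex a) (Rex a) i :=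
      (Fin.sum_univ_eq_sum_range (seqOf (Dex a) (Rex a)) (2 * (n + 1))).symm
    rw [show (2 * n + 2) = 2 * (n + 1) by ring, this,
      Finset.sum_congr rfl (fun i _ => recon ha i)]
    exact a_total ha
  have hTTodd := TT_odd (Dex a) (Rex a)
  have hcnt : cnt (Rex a) n = cnt (Dex a) n := by
    have h2 : TT (Dex a) (Rex a) (2 * n + 2) = TT (Dex a) (Rex a) (2 * n + 1)
        + seqOf (Dex a) (Rex a) (2 * n + 1) := by
      rw [show 2 * n + 2 = (2 * n + 1) + 1 by ring, TT, Finset.sum_range_succ, ← TT]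
    rw [htot, hTTodd n le_rfl, seqOf_last] at h2
    omega
  have hcard : (Dex a).card = (Rex a).card := by
    rw [← cnt_stable (Dex a) le_rfl, ← cnt_stable (Rex a) le_rfl, hcnt]
  refine ⟨hcard, fun j => ?_⟩
  show cnt (Dex a) j ≤ cnt (Rex a) j
  rcases le_or_gt j n with hjn | hjn
  · have hT := hpart ⟨2 * j, by omega⟩
    have hnn := ha.2.2 ⟨2 * j, by omega⟩
    rw [← hT] at hnn
    rw [hTTodd j hjn] at hnn
    omega
  · rw [cnt_stable (Dex a) (by omega), cnt_stable (Rex a) (by omega), hcard]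

noncomputable def equivDRSetCSeq (n : ℕ) : DRSet n ≃ CSeq (n + 1) where
  toFun p := ⟨seqF p.1.1 p.1.2, seqF_mem_CSeq p.1.1 p.1.2 p.2.1 p.2.2⟩
  invFun a := ⟨(Dex a.1, Rex a.1), extracted_mem a.2⟩
  left_inv := by
    rintro ⟨⟨D, R⟩, hp⟩
    apply Subtype.ext
    show (Dex (seqF D R), Rex (seqF D R)) = (D, R)
    have hD : Dex (seqF D R) = D := by
      ext j
      simp only [Dex, mem_filter, mem_univ, true_and]
      have : seqF D R ⟨2 * j.val + 2, by have := j.isLt; omega⟩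
          = if j ∈ D then -1 else 1 := by
        show seqOf D R (2 * j.val + 2) = _
        rw [seqOf_even D R j.val j.isLt]
      rw [this]
      split_ifs with hmem
      · simp [hmem]
      · simp only [hmem, iff_false]
    have hR : Rex (seqF D R) = R := by
      ext j
      simp only [Rex, mem_filter, mem_univ, true_and]
      have : seqF D R ⟨2 * j.val + 1, by have := j.isLt; omega⟩
          = if j ∈ R then 1 else -1 := by
        show seqOf D R (2 * j.val + 1) = _
        rw [seqOf_odd D R j.val j.isLt]
      rw [this]
      split_ifs with hmem
      · simp [hmem]
      · simp only [hmem, iff_false]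
    rw [hD, hR]
  right_inv := by
    rintro ⟨a, ha⟩
    apply Subtype.ext
    exact funext (fun i => recon ha i)

end BnCSeqAux

/-- There is a bijection between `B_n` and `C_{n+1}`. -/
theorem Bn_equiv_CSeq (n : ℕ) : Nonempty (Bn n ≃ CSeq (n + 1)) := by
  exact ⟨(equivBnDRSet n).trans (equivDRSetCSeq n)⟩
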